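/- Let g : [a,b] → (-∞,∞] be convex with g(r) = 0 for some r ∈ [a,b), let β, c ∈ ℝ, and define G(x) = c + ∫_a^x e^{β} g(t) dt. Then for every x ∈ (r,b], (G(x) - G(r))/(x - r)² ≤ (G(b) - G(r))/(b - r)². -/

import Mathlib

open MeasureTheory intervalIntegral

theorem convex_weighted_integral_ratio_zero (a b r β c : ℝ) (g : ℝ → ℝ)
    (hab : a ≤ b) (hr : r ∈ Set.Ico a b)
    (hg : ConvexOn ℝ (Set.Icc a b) g) (hgr : g r = 0)
    (hgi : IntervalIntegrable g volume a b)
    (G : ℝ → ℝ) (hG : G = fun x => c + ∫ t in a..x, Real.exp β * g t) :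
    ∀ x ∈ Set.Ioc r b,
      (G x - G r) / (x - r) ^ 2 ≤ (G b - G r) / (b - r) ^ 2 := by
  intro x hx
  obtain ⟨hrx, hxb⟩ := hx
  have hax : a ≤ x := hr.1.trans hrx.le
  have hibx : ∀ y, a ≤ y → y ≤ b → IntervalIntegrable g volume a y := fun y hy1 hy2 =>
    hgi.mono_set (by rw [Set.uIcc_of_le hy1, Set.uIcc_of_le hab]; exact Set.Icc_subset_Icc le_rfl hy2)
  have hGd : ∀ y, a ≤ y → y ≤ b → G y - G r = Real.exp β * ∫ t in r..y, g t := by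
    intro y hy1 hy2
    rw [hG]
    simp only
    rw [intervalIntegral.integral_const_mul, intervalIntegral.integral_const_mul,
      add_sub_add_left_eq_sub, ← mul_sub,
      intervalIntegral.integral_interval_sub_left (hibx y hy1 hy2) (hibx r hr.1 hr.2.le)]
  rw [hGd x hax hxb, hGd b hab le_rfl]
  have hu : (0:ℝ) < x - r := by linarith
  have hv : (0:ℝ) < b - r := by linarith
  have hsub : ∀ y, r < y →
      (∫ t in r..y, g t) = (y - r) * ∫ s in (0:ℝ)..1, g ((y - r) * s + r) := by
    intro y hy1
    have hy0 : y - r ≠ 0 := sub_ne_zero.2 hy1.ne'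
    rw [intervalIntegral.integral_comp_mul_add g hy0 r]
    rw [smul_eq_mul, ← mul_assoc, mul_inv_cancel₀ hy0, one_mul]
    norm_num
  have hcomp : ∀ y, r < y → y ≤ b →
      IntervalIntegrable (fun s => g ((y - r) * s + r)) volume 0 1 := by
    intro y hy1 hy2
    have h1 : IntervalIntegrable g volume r y := by
      apply hgi.mono_set
      rw [Set.uIcc_of_le hy1.le, Set.uIcc_of_le hab]
      exact Set.Icc_subset_Icc hr.1 hy2
    have h2 := (h1.comp_add_right r).comp_mul_left (c := y - r)
    have hy0 : y - r ≠ 0 := sub_ne_zero.2 hy1.ne'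
    simpa [sub_self, zero_div, div_self hy0] using h2
  set Jx := ∫ s in (0:ℝ)..1, g ((x - r) * s + r) with hJx
  set Jb := ∫ s in (0:ℝ)..1, g ((b - r) * s + r) with hJb
  have hpt : ∀ s ∈ Set.Icc (0:ℝ) 1,
      (b - r) * g ((x - r) * s + r) ≤ (x - r) * g ((b - r) * s + r) := by
    intro s hs
    obtain ⟨hs0, hs1⟩ := hs
    set lam := (x - r) / (b - r) with hlam
    have hlam0 : 0 < lam := div_pos hu hv
    have hlam1 : lam ≤ 1 := (div_le_one hv).2 (by linarith)
    have hq : (b - r) * s + r ∈ Set.Icc a b :=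
      ⟨by nlinarith [hr.1, mul_nonneg hv.le hs0],
       by nlinarith [mul_le_of_le_one_right hv.le hs1]⟩
    have hrmem : r ∈ Set.Icc a b := ⟨hr.1, hr.2.le⟩
    have hcvx := hg.2 hrmem hq (by linarith : (0:ℝ) ≤ 1 - lam) hlam0.le (by ring)
    have hcomb : (1 - lam) • r + lam • ((b - r) * s + r) = (x - r) * s + r := by
      rw [smul_eq_mul, smul_eq_mul, hlam]; field_simp; ring
    rw [hcomb, hgr] at hcvx
    simp only [smul_eq_mul, mul_zero, zero_add] at hcvx
    have h3 := mul_le_mul_of_nonneg_left hcvx hv.le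
    calc (b - r) * g ((x - r) * s + r) ≤ (b - r) * (lam * g ((b - r) * s + r)) := h3
      _ = (x - r) * g ((b - r) * s + r) := by rw [hlam]; field_simp
  have key : (b - r) * Jx ≤ (x - r) * Jb := by
    rw [hJx, hJb, ← intervalIntegral.integral_const_mul, ← intervalIntegral.integral_const_mul]
    exact intervalIntegral.integral_mono_on (by norm_num)
      ((hcomp x hrx hxb).const_mul _) ((hcomp b hr.2 le_rfl).const_mul _) hpt
  rw [hsub x hrx, hsub b hr.2]
  have e1 : Real.exp β * ((x - r) * Jx) / (x - r) ^ 2 = Real.exp β * (Jx / (x - r)) := by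
    field_simp
  have e2 : Real.exp β * ((b - r) * Jb) / (b - r) ^ 2 = Real.exp β * (Jb / (b - r)) := by
    field_simp
  rw [e1, e2]
  exact mul_le_mul_of_nonneg_left
    ((div_le_div_iff₀ hu hv).2 (by linarith)) (Real.exp_nonneg β)
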